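/- One SDC sweep gains one order per iteration for a scalar linear ODE: for u' = λu on [t_0, t_0+Δt] with collocation matrix Q and preconditioner Q_Δ whose entries are all O(Δt·|entries of reference matrices|), if the iterate u^k satisfies max_m |u(τ_m) − u_m^k| ≤ C Δt^{k+1} and the quadrature error satisfies max_m |∫_{t_0}^{τ_m} λ u(s) ds − Σ_j q_{m,j} λ u(τ_j)| ≤ C' Δt^{M+1}, then the next iterate u^{k+1} defined by u_m^{k+1} = u_0 + Σ_{j≤m} q̃_{m,j} λ(u_j^{k+1} − u_j^k) + Σ_j q_{m,j} λ u_j^k satisfies max_m |u(τ_m) − u_m^{k+1}| ≤ C'' Δt^{min(k+2, M+1)} for Δt sufficiently small. -/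

import Mathlib

open Set intervalIntegral Finset

set_option maxHeartbeats 2000000 in
/-- one SDC sweep gains one order per iteration for the scalar
linear ODE `u' = λ u`: if the iterate `u^k` is accurate of order `k+1` and the
spectral quadrature error is of order `M+1`, then the next iterate `u^{k+1}` is
accurate of order `min (k+2) (M+1)`, for `Δt` sufficiently small. -/
theorem stmt16 (M k : ℕ) (lam u0 t0 : ℝ) (u : ℝ → ℝ)
    (hu : ∀ t, u t = u0 * Real.exp (lam * (t - t0)))
    (c C C' : ℝ) (hc : 0 < c) (hC : 0 < C) (hC' : 0 < C') :
    ∃ C'' > (0 : ℝ), ∃ δ > (0 : ℝ), ∀ Δt : ℝ, 0 < Δt → Δt < δ →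
      ∀ (τ : Fin M → ℝ) (q qt : Fin M → Fin M → ℝ) (uk uk1 : Fin M → ℝ),
        StrictMono τ →
        (∀ m, τ m ∈ Icc t0 (t0 + Δt)) →
        -- quadrature weights and preconditioner entries are O(Δt)
        (∀ m j, |q m j| ≤ c * Δt) →
        (∀ m j, |qt m j| ≤ c * Δt) →
        -- the quadrature rule is exact to order M (error O(Δt^{M+1}))
        (∀ m, |(∫ s in t0..(τ m), lam * u s) -
            ∑ j, q m j * (lam * u (τ j))| ≤ C' * Δt ^ (M + 1)) →
        -- current iterate is accurate of order k+1
        (∀ m, |u (τ m) - uk m| ≤ C * Δt ^ (k + 1)) →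
        -- SDC sweep (lower-triangular correction)
        (∀ m, uk1 m = u0 +
            (∑ j ∈ Finset.univ.filter (fun j : Fin M => j ≤ m),
              qt m j * (lam * (uk1 j - uk j))) +
            ∑ j, q m j * (lam * uk j)) →
        ∀ m, |u (τ m) - uk1 m| ≤ C'' * Δt ^ (min (k + 2) (M + 1)) := by
  have hfacpos : (0 : ℝ) < ((M + 1).factorial : ℝ) := by
    exact_mod_cast Nat.factorial_pos (M + 1)
  have hLpos : (0 : ℝ) < |lam| + 1 := by positivity
  refine ⟨2 * ((M + 1).factorial : ℝ) * (C' + 2 * M * c * (|lam| + 1) * C), ?_,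
    min 1 (1 / (2 * c * (|lam| + 1))), ?_, ?_⟩
  · have h1 : (0 : ℝ) < C' + 2 * M * c * (|lam| + 1) * C := by positivity
    positivity
  · positivity
  intro Δt hΔ hΔδ τ q qt uk uk1 _hmono _hmem hq hqt hquad hukacc huk1
  have hΔ1 : Δt ≤ 1 := le_of_lt (lt_of_lt_of_le hΔδ (min_le_left _ _))
  have hr : c * Δt * (|lam| + 1) ≤ 1 / 2 := by
    have h2 : Δt < 1 / (2 * c * (|lam| + 1)) := lt_of_lt_of_le hΔδ (min_le_right _ _)
    have hcL : (0 : ℝ) < c * (|lam| + 1) := by positivity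
    have h3 := mul_lt_mul_of_pos_left h2 hcL
    have heq : c * (|lam| + 1) * (1 / (2 * c * (|lam| + 1))) = 1 / 2 := by
      field_simp
    nlinarith
  -- integral identity
  have hueq : u = fun x => u0 * Real.exp (lam * (x - t0)) := funext hu
  have hderiv : ∀ s : ℝ, HasDerivAt u (lam * u s) s := by
    intro s
    have h1 : HasDerivAt (fun x : ℝ => lam * (x - t0)) lam s := by
      simpa using ((hasDerivAt_id s).sub_const t0).const_mul lam
    have h2 := (h1.exp).const_mul u0
    rw [← hueq] at h2
    rw [show lam * u s = u0 * (Real.exp (lam * (s - t0)) * lam) by rw [hu]; ring]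
    exact h2
  have hcont : Continuous u := by rw [hueq]; continuity
  have hint : ∀ t, (∫ s in t0..t, lam * u s) = u t - u0 := by
    intro t
    rw [intervalIntegral.integral_eq_sub_of_hasDerivAt (fun s _ => hderiv s)
      ((continuous_const.mul hcont).intervalIntegrable _ _)]
    rw [hu t0]; simp
  have hA0 : (0 : ℝ) ≤ C' * Δt ^ (M + 1) +
      2 * M * ((c * Δt) * ((|lam| + 1) * (C * Δt ^ (k + 1)))) := by positivity
  -- key recursive estimate
  have hkey : ∀ m : Fin M, |u (τ m) - uk1 m| ≤
      (C' * Δt ^ (M + 1) + 2 * M * ((c * Δt) * ((|lam| + 1) * (C * Δt ^ (k + 1)))))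
      + (c * Δt * (|lam| + 1)) *
        ∑ j ∈ Finset.univ.filter (fun j : Fin M => j ≤ m), |u (τ j) - uk1 j| := by
    intro m
    have hid : u (τ m) - uk1 m =
        ((u (τ m) - u0) - ∑ j, q m j * (lam * u (τ j)))
        + (∑ j, q m j * (lam * (u (τ j) - uk j)))
        + ∑ j ∈ Finset.univ.filter (fun j : Fin M => j ≤ m),
            qt m j * (lam * ((u (τ j) - uk1 j) - (u (τ j) - uk j))) := by
      rw [huk1 m]
      have hA : ∑ j, q m j * (lam * (u (τ j) - uk j)) =
          (∑ j, q m j * (lam * u (τ j))) - ∑ j, q m j * (lam * uk j) := by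
        rw [← Finset.sum_sub_distrib]
        exact Finset.sum_congr rfl fun j _ => by ring
      have hB : ∑ j ∈ Finset.univ.filter (fun j : Fin M => j ≤ m),
            qt m j * (lam * ((u (τ j) - uk1 j) - (u (τ j) - uk j)))
          = -∑ j ∈ Finset.univ.filter (fun j : Fin M => j ≤ m),
              qt m j * (lam * (uk1 j - uk j)) := by
        rw [← Finset.sum_neg_distrib]
        exact Finset.sum_congr rfl fun j _ => by ring
      rw [hA, hB]; ring
    have hT1 : |(u (τ m) - u0) - ∑ j, q m j * (lam * u (τ j))| ≤ C' * Δt ^ (M + 1) := by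
      rw [← hint (τ m)]; exact hquad m
    have hT2 : |∑ j, q m j * (lam * (u (τ j) - uk j))| ≤
        M * ((c * Δt) * ((|lam| + 1) * (C * Δt ^ (k + 1)))) := by
      calc |∑ j, q m j * (lam * (u (τ j) - uk j))|
          ≤ ∑ j, |q m j * (lam * (u (τ j) - uk j))| := Finset.abs_sum_le_sum_abs _ _
        _ ≤ ∑ _j : Fin M, (c * Δt) * ((|lam| + 1) * (C * Δt ^ (k + 1))) := by
            refine Finset.sum_le_sum fun j _ => ?_
            rw [abs_mul, abs_mul]
            have h1 := hq m j
            have h2 := hukacc j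
            have hl : |lam| ≤ |lam| + 1 := by linarith
            exact mul_le_mul h1 (mul_le_mul hl h2 (abs_nonneg _) (by positivity))
              (by positivity) (by positivity)
        _ = M * ((c * Δt) * ((|lam| + 1) * (C * Δt ^ (k + 1)))) := by
            rw [Finset.sum_const, Finset.card_univ, Fintype.card_fin, nsmul_eq_mul]
    have hT3 : |∑ j ∈ Finset.univ.filter (fun j : Fin M => j ≤ m),
          qt m j * (lam * ((u (τ j) - uk1 j) - (u (τ j) - uk j)))| ≤
        (c * Δt * (|lam| + 1)) *
          (∑ j ∈ Finset.univ.filter (fun j : Fin M => j ≤ m), |u (τ j) - uk1 j|)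
        + M * ((c * Δt) * ((|lam| + 1) * (C * Δt ^ (k + 1)))) := by
      have step1 : |∑ j ∈ Finset.univ.filter (fun j : Fin M => j ≤ m),
            qt m j * (lam * ((u (τ j) - uk1 j) - (u (τ j) - uk j)))| ≤
          ∑ j ∈ Finset.univ.filter (fun j : Fin M => j ≤ m),
            ((c * Δt * (|lam| + 1)) * |u (τ j) - uk1 j|
              + (c * Δt) * ((|lam| + 1) * (C * Δt ^ (k + 1)))) := by
        refine (Finset.abs_sum_le_sum_abs _ _).trans (Finset.sum_le_sum fun j _ => ?_)
        rw [abs_mul, abs_mul]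
        have habs : |(u (τ j) - uk1 j) - (u (τ j) - uk j)| ≤
            |u (τ j) - uk1 j| + C * Δt ^ (k + 1) := by
          calc |(u (τ j) - uk1 j) - (u (τ j) - uk j)|
              ≤ |u (τ j) - uk1 j| + |u (τ j) - uk j| := abs_sub _ _
            _ ≤ |u (τ j) - uk1 j| + C * Δt ^ (k + 1) := by linarith [hukacc j]
        have hl : |lam| ≤ |lam| + 1 := by linarith
        have h1 : |qt m j| * (|lam| * |(u (τ j) - uk1 j) - (u (τ j) - uk j)|) ≤
            (c * Δt) * ((|lam| + 1) * (|u (τ j) - uk1 j| + C * Δt ^ (k + 1))) :=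
          mul_le_mul (hqt m j) (mul_le_mul hl habs (abs_nonneg _) (by positivity))
            (by positivity) (by positivity)
        nlinarith [h1]
      have step2 : ∑ j ∈ Finset.univ.filter (fun j : Fin M => j ≤ m),
            ((c * Δt * (|lam| + 1)) * |u (τ j) - uk1 j|
              + (c * Δt) * ((|lam| + 1) * (C * Δt ^ (k + 1)))) =
          (c * Δt * (|lam| + 1)) *
            (∑ j ∈ Finset.univ.filter (fun j : Fin M => j ≤ m), |u (τ j) - uk1 j|)
          + ((Finset.univ.filter (fun j : Fin M => j ≤ m)).card : ℝ) *
              ((c * Δt) * ((|lam| + 1) * (C * Δt ^ (k + 1)))) := by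
        rw [Finset.sum_add_distrib, Finset.sum_const, ← Finset.mul_sum, nsmul_eq_mul]
      have hcard : ((Finset.univ.filter (fun j : Fin M => j ≤ m)).card : ℝ) ≤ M := by
        have := Finset.card_filter_le (Finset.univ : Finset (Fin M)) (fun j => j ≤ m)
        rw [Finset.card_univ, Fintype.card_fin] at this
        exact_mod_cast this
      have step3 : ((Finset.univ.filter (fun j : Fin M => j ≤ m)).card : ℝ) *
            ((c * Δt) * ((|lam| + 1) * (C * Δt ^ (k + 1)))) ≤
          M * ((c * Δt) * ((|lam| + 1) * (C * Δt ^ (k + 1)))) :=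
        mul_le_mul_of_nonneg_right hcard (by positivity)
      rw [step2] at step1
      linarith
    calc |u (τ m) - uk1 m| = |_ + _ + _| := by rw [hid]
      _ ≤ |_ + _| + |_| := abs_add_le _ _
      _ ≤ |(u (τ m) - u0) - ∑ j, q m j * (lam * u (τ j))|
          + |∑ j, q m j * (lam * (u (τ j) - uk j))|
          + |∑ j ∈ Finset.univ.filter (fun j : Fin M => j ≤ m),
              qt m j * (lam * ((u (τ j) - uk1 j) - (u (τ j) - uk j)))| := by
        have := abs_add_le ((u (τ m) - u0) - ∑ j, q m j * (lam * u (τ j)))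
          (∑ j, q m j * (lam * (u (τ j) - uk j)))
        linarith
      _ ≤ _ := by linarith [hT1, hT2, hT3]
  -- strong induction
  have hgen : ∀ n : ℕ, ∀ m : Fin M, (m : ℕ) < n →
      |u (τ m) - uk1 m| ≤
      2 * (C' * Δt ^ (M + 1) + 2 * M * ((c * Δt) * ((|lam| + 1) * (C * Δt ^ (k + 1)))))
        * (((m : ℕ) + 1).factorial : ℝ) := by
    intro n
    induction n with
    | zero => intro m hm; exact absurd hm (Nat.not_lt_zero _)
    | succ n ih =>
      intro m hm
      have hsplit : (Finset.univ.filter (fun j : Fin M => j ≤ m)) =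
          insert m (Finset.univ.filter (fun j : Fin M => j < m)) := by
        ext j
        simp only [Finset.mem_filter, Finset.mem_univ, true_and, Finset.mem_insert]
        rw [le_iff_lt_or_eq]
        tauto
      have hnot : m ∉ Finset.univ.filter (fun j : Fin M => j < m) := by simp
      have hsum := hkey m
      rw [hsplit, Finset.sum_insert hnot] at hsum
      have hSnn : (0 : ℝ) ≤ ∑ j ∈ Finset.univ.filter (fun j : Fin M => j < m),
          |u (τ j) - uk1 j| := Finset.sum_nonneg fun j _ => abs_nonneg _
      have hprev : ∀ j ∈ Finset.univ.filter (fun j : Fin M => j < m),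
          |u (τ j) - uk1 j| ≤
          2 * (C' * Δt ^ (M + 1) + 2 * M * ((c * Δt) * ((|lam| + 1) * (C * Δt ^ (k + 1)))))
            * ((m : ℕ).factorial : ℝ) := by
        intro j hj
        simp only [Finset.mem_filter, Finset.mem_univ, true_and] at hj
        have hjm : (j : ℕ) < (m : ℕ) := hj
        have hjn : (j : ℕ) < n := by omega
        have h1 := ih j hjn
        have hfle : (((j : ℕ) + 1).factorial : ℝ) ≤ ((m : ℕ).factorial : ℝ) := by
          exact_mod_cast Nat.factorial_le (by omega)
        have h2 := mul_le_mul_of_nonneg_left hfle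
          (show (0 : ℝ) ≤ 2 * (C' * Δt ^ (M + 1) +
            2 * M * ((c * Δt) * ((|lam| + 1) * (C * Δt ^ (k + 1))))) by linarith)
        linarith
      have hSle := Finset.sum_le_sum hprev
      rw [Finset.sum_const, nsmul_eq_mul] at hSle
      have hcard : ((Finset.univ.filter (fun j : Fin M => j < m)).card : ℝ) ≤ (m : ℕ) := by
        have heq : Finset.univ.filter (fun j : Fin M => j < m) = Finset.Iio m := by
          ext j; simp
        rw [heq, Fin.card_Iio]
      have hf1 : (1 : ℝ) ≤ ((m : ℕ).factorial : ℝ) := by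
        exact_mod_cast Nat.one_le_iff_ne_zero.mpr (Nat.factorial_pos (m : ℕ)).ne'
      have hfsucc : ((((m : ℕ)) + 1).factorial : ℝ) =
          ((m : ℕ) + 1) * ((m : ℕ).factorial : ℝ) := by
        push_cast [Nat.factorial_succ]; ring
      set A0 := C' * Δt ^ (M + 1) + 2 * M * ((c * Δt) * ((|lam| + 1) * (C * Δt ^ (k + 1))))
      set Sp := ∑ j ∈ Finset.univ.filter (fun j : Fin M => j < m), |u (τ j) - uk1 j|
      -- hsum : |e m| ≤ A0 + r * (|e m| + Sp), r ≤ 1/2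
      have hr0 : (0 : ℝ) ≤ c * Δt * (|lam| + 1) := by positivity
      have half : c * Δt * (|lam| + 1) * (|u (τ m) - uk1 m| + Sp) ≤
          (1 / 2) * (|u (τ m) - uk1 m| + Sp) :=
        mul_le_mul_of_nonneg_right hr (add_nonneg (abs_nonneg _) hSnn)
      have hstep : |u (τ m) - uk1 m| ≤ 2 * A0 + Sp := by nlinarith [abs_nonneg (u (τ m) - uk1 m)]
      have hSbd : Sp ≤ ((m : ℕ) : ℝ) * (2 * A0 * ((m : ℕ).factorial : ℝ)) := by
        have := mul_le_mul_of_nonneg_right hcard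
          (show (0 : ℝ) ≤ 2 * A0 * ((m : ℕ).factorial : ℝ) from
            mul_nonneg (by linarith) (Nat.cast_nonneg _))
        linarith
      rw [hfsucc]
      nlinarith [mul_nonneg hA0 (sub_nonneg.mpr hf1)]
  -- conclusion
  intro m
  have hm := hgen M m m.isLt
  have hf : ((((m : ℕ)) + 1).factorial : ℝ) ≤ (((M + 1)).factorial : ℝ) := by
    exact_mod_cast Nat.factorial_le (by omega)
  have hpow1 : Δt ^ (M + 1) ≤ Δt ^ (min (k + 2) (M + 1)) :=
    pow_le_pow_of_le_one hΔ.le hΔ1 (min_le_right _ _)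
  have hpow2 : Δt ^ (k + 2) ≤ Δt ^ (min (k + 2) (M + 1)) :=
    pow_le_pow_of_le_one hΔ.le hΔ1 (min_le_left _ _)
  have hA0le : C' * Δt ^ (M + 1) + 2 * M * ((c * Δt) * ((|lam| + 1) * (C * Δt ^ (k + 1)))) ≤
      (C' + 2 * M * c * (|lam| + 1) * C) * Δt ^ (min (k + 2) (M + 1)) := by
    have e1 : C' * Δt ^ (M + 1) ≤ C' * Δt ^ (min (k + 2) (M + 1)) :=
      mul_le_mul_of_nonneg_left hpow1 hC'.le
    have e2 : 2 * M * ((c * Δt) * ((|lam| + 1) * (C * Δt ^ (k + 1)))) =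
        (2 * M * c * (|lam| + 1) * C) * Δt ^ (k + 2) := by ring
    have e3 : (2 * M * c * (|lam| + 1) * C) * Δt ^ (k + 2) ≤
        (2 * M * c * (|lam| + 1) * C) * Δt ^ (min (k + 2) (M + 1)) :=
      mul_le_mul_of_nonneg_left hpow2 (by positivity)
    linarith [e2 ▸ e3]
  have s1 : 2 * (C' * Δt ^ (M + 1) + 2 * M * ((c * Δt) * ((|lam| + 1) * (C * Δt ^ (k + 1)))))
        * ((((m : ℕ)) + 1).factorial : ℝ) ≤
      2 * (C' * Δt ^ (M + 1) + 2 * M * ((c * Δt) * ((|lam| + 1) * (C * Δt ^ (k + 1)))))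
        * (((M + 1)).factorial : ℝ) :=
    mul_le_mul_of_nonneg_left hf (by linarith)
  have s2 : 2 * (C' * Δt ^ (M + 1) + 2 * M * ((c * Δt) * ((|lam| + 1) * (C * Δt ^ (k + 1)))))
        * (((M + 1)).factorial : ℝ) ≤
      2 * ((C' + 2 * M * c * (|lam| + 1) * C) * Δt ^ (min (k + 2) (M + 1)))
        * (((M + 1)).factorial : ℝ) := by
    have := mul_le_mul_of_nonneg_right hA0le hfacpos.le
    nlinarith
  have heq : 2 * ((C' + 2 * M * c * (|lam| + 1) * C) * Δt ^ (min (k + 2) (M + 1)))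
        * (((M + 1)).factorial : ℝ) =
      2 * (((M + 1)).factorial : ℝ) * (C' + 2 * M * c * (|lam| + 1) * C)
        * Δt ^ (min (k + 2) (M + 1)) := by ring
  linarith [heq ▸ s2]
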